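/- The function c : (0,1) → ℝ defined by c(γ) := inf over CDFs W of (n⁻¹ Σ_{i=1}^n (𝔽_n(x_i) − γW(x_i) − (1−γ)F_b(x_i))²)^{1/2} is non-increasing and convex on (0,1). (In the paper's notation, γ d_n(F̂_{s,n}^γ, F̌_{s,n}^γ) is a non-increasing convex function of γ on (0,1).) -/

import Mathlib

open Filter Topology

/-- A cumulative distribution function: non-decreasing, right-continuous,
tending to 0 at -∞ and to 1 at +∞. -/
def IsCDF (G : ℝ → ℝ) : Prop :=
  Monotone G ∧ (∀ x : ℝ, ContinuousWithinAt G (Set.Ici x) x) ∧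
    Tendsto G atBot (𝓝 0) ∧ Tendsto G atTop (𝓝 1)

/-- The identifiable mixing proportion α₀. -/
noncomputable def alpha0 (F Fb : ℝ → ℝ) : ℝ :=
  sInf {γ : ℝ | γ ∈ Set.Ioc (0 : ℝ) 1 ∧
    IsCDF (fun x => (F x - (1 - γ) * Fb x) / γ)}

lemma IsCDF.combo {W₁ W₂ : ℝ → ℝ} (h₁ : IsCDF W₁) (h₂ : IsCDF W₂)
    {a b : ℝ} (ha : 0 ≤ a) (hb : 0 ≤ b) (hab : a + b = 1) :
    IsCDF (fun t => a * W₁ t + b * W₂ t) := by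
  obtain ⟨m₁, r₁, b₁, t₁⟩ := h₁
  obtain ⟨m₂, r₂, b₂, t₂⟩ := h₂
  refine ⟨fun s t hst => ?_, fun t => ?_, ?_, ?_⟩
  · exact add_le_add (mul_le_mul_of_nonneg_left (m₁ hst) ha)
      (mul_le_mul_of_nonneg_left (m₂ hst) hb)
  · exact ((continuousWithinAt_const.mul (r₁ t)).add
      (continuousWithinAt_const.mul (r₂ t)))
  · have := ((b₁.const_mul a).add (b₂.const_mul b))
    simpa using this
  · have := ((t₁.const_mul a).add (t₂.const_mul b))
    simpa [hab] using this

lemma qnorm_eq (n : ℕ) (y : EuclideanSpace ℝ (Fin n)) :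
    Real.sqrt ((n : ℝ)⁻¹ * ∑ i, (y i) ^ 2) = Real.sqrt (n : ℝ)⁻¹ * ‖y‖ := by
  rw [Real.sqrt_mul (by positivity), EuclideanSpace.norm_eq, Real.sqrt_inv]
  congr 2
  exact Finset.sum_congr rfl fun i _ => by rw [Real.norm_eq_abs, sq_abs]

/-- Lemma 8: γ ↦ γ dₙ(F̂ₛₙᵞ, F̌ₛₙᵞ) is non-increasing and convex on (0,1). -/
theorem criterion_antitone_convex
    (Fb : ℝ → ℝ) (hFb : IsCDF Fb)
    (n : ℕ) (hn : 0 < n) (x : Fin n → ℝ)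
    (Fn : ℝ → ℝ) (hFn : Fn = fun t => (n : ℝ)⁻¹ * ∑ i, if x i ≤ t then (1 : ℝ) else 0)
    (c : ℝ → ℝ)
    (hc : ∀ γ : ℝ, c γ = sInf {v : ℝ | ∃ W : ℝ → ℝ, IsCDF W ∧
      v = Real.sqrt ((n : ℝ)⁻¹ *
        ∑ i, (Fn (x i) - γ * W (x i) - (1 - γ) * Fb (x i)) ^ 2)}) :
    AntitoneOn c (Set.Ioo (0 : ℝ) 1) ∧ ConvexOn ℝ (Set.Ioo (0 : ℝ) 1) c := by
  set S : ℝ → Set ℝ := fun γ => {v : ℝ | ∃ W : ℝ → ℝ, IsCDF W ∧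
      v = Real.sqrt ((n : ℝ)⁻¹ *
        ∑ i, (Fn (x i) - γ * W (x i) - (1 - γ) * Fb (x i)) ^ 2)} with hS
  have hne : ∀ γ : ℝ, (S γ).Nonempty := fun γ => ⟨_, Fb, hFb, rfl⟩
  have hbdd : ∀ γ : ℝ, BddBelow (S γ) := by
    intro γ
    refine ⟨0, fun v hv => ?_⟩
    obtain ⟨W, _, rfl⟩ := hv
    exact Real.sqrt_nonneg _
  -- antitone
  have hanti : AntitoneOn c (Set.Ioo (0 : ℝ) 1) := by
    intro γ₁ hγ₁ γ₂ hγ₂ h12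
    rw [hc γ₁, hc γ₂]
    refine csInf_le_csInf (hbdd γ₂) (hne γ₁) ?_
    rintro v ⟨W, hW, rfl⟩
    have hγ₂pos : (0:ℝ) < γ₂ := hγ₂.1
    refine ⟨fun t => (γ₁ / γ₂) * W t + (1 - γ₁ / γ₂) * Fb t, ?_, ?_⟩
    · exact hW.combo hFb (div_nonneg hγ₁.1.le hγ₂pos.le)
        (by rw [sub_nonneg]; exact div_le_one_of_le₀ h12 hγ₂pos.le) (by ring)
    · refine congrArg _ (congrArg _ (Finset.sum_congr rfl fun i _ => ?_))
      congr 1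
      field_simp
      ring
  refine ⟨hanti, ?_⟩
  -- convexity
  refine ⟨convex_Ioo 0 1, ?_⟩
  intro γ₁ hγ₁ γ₂ hγ₂ a b ha hb hab
  rcases eq_or_lt_of_le ha with rfl | ha'
  · simp only [zero_add] at hab; subst hab; simp
  rcases eq_or_lt_of_le hb with rfl | hb'
  · simp only [add_zero] at hab; subst hab; simp
  set γ := a * γ₁ + b * γ₂ with hγdef
  have hγpos : 0 < γ := by
    have := hγ₁.1; have := hγ₂.1; positivity
  refine le_of_forall_pos_le_add ?_
  intro ε hε
  obtain ⟨v₁, ⟨W₁, hW₁, hv₁⟩, hv₁lt⟩ :=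
    exists_lt_of_csInf_lt (hne γ₁) (show sInf (S γ₁) < c γ₁ + ε by rw [hc γ₁] at *; linarith)
  obtain ⟨v₂, ⟨W₂, hW₂, hv₂⟩, hv₂lt⟩ :=
    exists_lt_of_csInf_lt (hne γ₂) (show sInf (S γ₂) < c γ₂ + ε by rw [hc γ₂] at *; linarith)
  set W : ℝ → ℝ := fun t => (a * γ₁ / γ) * W₁ t + (b * γ₂ / γ) * W₂ t with hWdef
  have hWcdf : IsCDF W := by
    refine hW₁.combo hW₂ (by have := hγ₁.1; positivity) (by have := hγ₂.1; positivity) ?_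
    field_simp
    exact hγdef.symm
  -- value at W
  set u : EuclideanSpace ℝ (Fin n) :=
    WithLp.toLp 2 (fun i => Fn (x i) - γ₁ * W₁ (x i) - (1 - γ₁) * Fb (x i)) with hu
  set w : EuclideanSpace ℝ (Fin n) :=
    WithLp.toLp 2 (fun i => Fn (x i) - γ₂ * W₂ (x i) - (1 - γ₂) * Fb (x i)) with hw
  have key : ∀ i, Fn (x i) - γ * W (x i) - (1 - γ) * Fb (x i) = a * u i + b * w i := by
    intro i
    simp only [hu, hw, hWdef, PiLp.toLp_apply]
    have h1 : γ * ((a * γ₁ / γ) * W₁ (x i) + (b * γ₂ / γ) * W₂ (x i))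
        = a * γ₁ * W₁ (x i) + b * γ₂ * W₂ (x i) := by
      field_simp
    rw [h1, hγdef]
    linear_combination (Fb (x i) - Fn (x i)) * hab
  have hmem : Real.sqrt ((n : ℝ)⁻¹ *
      ∑ i, (Fn (x i) - γ * W (x i) - (1 - γ) * Fb (x i)) ^ 2) ∈ S γ := ⟨W, hWcdf, rfl⟩
  have hle : c γ ≤ Real.sqrt ((n : ℝ)⁻¹ *
      ∑ i, (Fn (x i) - γ * W (x i) - (1 - γ) * Fb (x i)) ^ 2) := by
    rw [hc γ]; exact csInf_le (hbdd γ) hmem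
  have hval : Real.sqrt ((n : ℝ)⁻¹ *
      ∑ i, (Fn (x i) - γ * W (x i) - (1 - γ) * Fb (x i)) ^ 2)
      ≤ a * v₁ + b * v₂ := by
    have heq : (∑ i, (Fn (x i) - γ * W (x i) - (1 - γ) * Fb (x i)) ^ 2)
        = ∑ i, ((a • u + b • w) i) ^ 2 := by
      refine Finset.sum_congr rfl fun i _ => ?_
      rw [key i]
      simp [smul_eq_mul]
    rw [heq, qnorm_eq, hv₁, hv₂]
    erw [qnorm_eq n u, qnorm_eq n w]
    have htri : ‖a • u + b • w‖ ≤ a * ‖u‖ + b * ‖w‖ := by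
      calc ‖a • u + b • w‖ ≤ ‖a • u‖ + ‖b • w‖ := norm_add_le _ _
        _ = a * ‖u‖ + b * ‖w‖ := by
            rw [norm_smul, norm_smul, Real.norm_eq_abs, Real.norm_eq_abs,
              abs_of_nonneg ha, abs_of_nonneg hb]
    have hnn : (0:ℝ) ≤ Real.sqrt (n : ℝ)⁻¹ := Real.sqrt_nonneg _
    calc Real.sqrt (n:ℝ)⁻¹ * ‖a • u + b • w‖
        ≤ Real.sqrt (n:ℝ)⁻¹ * (a * ‖u‖ + b * ‖w‖) := by
          exact mul_le_mul_of_nonneg_left htri hnn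
      _ = a * (Real.sqrt (n:ℝ)⁻¹ * ‖u‖) + b * (Real.sqrt (n:ℝ)⁻¹ * ‖w‖) := by ring
  calc c γ ≤ a * v₁ + b * v₂ := hle.trans hval
    _ ≤ a * (c γ₁ + ε) + b * (c γ₂ + ε) := by
        exact add_le_add (mul_le_mul_of_nonneg_left hv₁lt.le ha)
          (mul_le_mul_of_nonneg_left hv₂lt.le hb)
    _ = a * c γ₁ + b * c γ₂ + ε := by linear_combination ε * hab
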